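/- (Vizing's theorem, the benchmark result of the paper.) Every finite simple graph G with maximum degree at most Δ admits a proper edge coloring of all of its edges using at most Δ + 1 colors; that is, the chromatic index of G satisfies χ'(G) ≤ Δ + 1. -/

import Mathlib

open SimpleGraph

section Setup
variable {V : Type*} [Fintype V] [DecidableEq V]
variable (G : SimpleGraph V) [DecidableRel G.Adj] (Δ : ℕ)


lemma walk_head {H : SimpleGraph V} {x a : V} (P : H.Walk x a) (hP : P.IsPath)
    (hax : a ≠ x) : ∃ w, H.Adj x w ∧ ∃ p : H.Walk w a, p.IsPath ∧ x ∉ p.support := by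
  cases P with
  | nil => exact absurd rfl hax
  | cons h p =>
    rw [SimpleGraph.Walk.cons_isPath_iff] at hP
    exact ⟨_, h, p, hP.1, hP.2⟩

lemma walk_head' {H : SimpleGraph V} {w a : V} (p : H.Walk w a) (hp : p.IsPath)
    (haw : a ≠ w) : ∃ u, H.Adj w u ∧ u ∈ p.support := by
  cases p with
  | nil => exact absurd rfl haw
  | cons h q =>
    refine ⟨_, h, ?_⟩
    rw [SimpleGraph.Walk.support_cons]
    exact List.mem_cons_of_mem _ q.start_mem_support

lemma three_endpoints :
    ∀ (n : ℕ) (H : SimpleGraph V), H.edgeSet.ncard ≤ n →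
    (∀ v a b c : V, H.Adj v a → H.Adj v b → H.Adj v c → a = b ∨ a = c ∨ b = c) →
    ∀ x a b : V, (∀ p q, H.Adj x p → H.Adj x q → p = q) →
    (∀ p q, H.Adj a p → H.Adj a q → p = q) →
    (∀ p q, H.Adj b p → H.Adj b q → p = q) →
    a ≠ x → b ≠ x → H.Reachable x a → H.Reachable x b → a = b := by
  intro n
  induction n with
  | zero =>
    intro H hcard _ x a b _ _ _ hax _ hra _
    exfalso
    obtain ⟨P⟩ := hra
    cases P with
    | nil => exact hax rfl
    | cons h p =>
      have : s(x, _) ∈ H.edgeSet := h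
      have hfin : H.edgeSet.Finite := Set.toFinite _
      have := Set.ncard_pos (s := H.edgeSet) |>.2 ⟨_, this⟩
      omega
  | succ n ih =>
    intro H hcard hdeg2 x a b hx ha hb hax hbx hra hrb
    -- take paths
    obtain ⟨PP, hPP⟩ := hra.some.toPath
    obtain ⟨QQ, hQQ⟩ := hrb.some.toPath
    obtain ⟨w, hxw, p, hp, hxp⟩ := walk_head PP hPP hax
    obtain ⟨w', hxw', q0, hq0, hxq0⟩ := walk_head QQ hQQ hbx
    have hww' : w = w' := hx _ _ hxw hxw'
    subst hww'
    by_cases haw : a = w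
    · -- show b = w
      subst haw
      by_contra hbw
      obtain ⟨u, hwu, hu⟩ := walk_head' q0 hq0 (fun h => hbw h.symm)
      have hux : u ≠ x := by rintro rfl; exact hxq0 hu
      exact hux (ha _ _ hwu hxw.symm)
    · by_cases hbw : b = w
      · subst hbw
        exfalso
        obtain ⟨u, hwu, hu⟩ := walk_head' p hp (fun h => haw h)
        have hux : u ≠ x := by rintro rfl; exact hxp hu
        exact hux (hb _ _ hwu hxw.symm)
      · -- main case: delete edge s(x,w)
        set H' := H.deleteEdges {s(x, w)} with hH'
        have hle : H' ≤ H := H.deleteEdges_le _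
        have hmem : s(x, w) ∈ H.edgeSet := hxw
        have hcard' : H'.edgeSet.ncard ≤ n := by
          have hes : H'.edgeSet = H.edgeSet \ {s(x, w)} := H.edgeSet_deleteEdges _
          have h1 : H'.edgeSet.ncard < H.edgeSet.ncard := by
            rw [hes]
            refine Set.ncard_lt_ncard ?_ (Set.toFinite _)
            exact ⟨Set.diff_subset, fun hsub => (hsub hmem).2 rfl⟩
          omega
        have hadj' : ∀ u v : V, H'.Adj u v → H.Adj u v := fun u v h => hle h
        have avoid : ∀ {z : V} (r : H.Walk w z), x ∉ r.support →
            ∀ e ∈ r.edges, e ∉ ({s(x, w)} : Set (Sym2 V)) := by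
          intro z r hxr e he
          simp only [Set.mem_singleton_iff]
          rintro rfl
          exact hxr (r.fst_mem_support_of_mem_edges he)
        have hwa : H'.Reachable w a := ⟨p.toDeleteEdges _ (avoid p hxp)⟩
        have hwb : H'.Reachable w b := ⟨q0.toDeleteEdges _ (avoid q0 hxq0)⟩
        have hw' : ∀ u v, H'.Adj w u → H'.Adj w v → u = v := by
          intro u v hu hv
          rw [hH', SimpleGraph.deleteEdges_adj] at hu hv
          have hux : u ≠ x := by
            rintro rfl
            exact hu.2 (by rw [Set.mem_singleton_iff]; exact Sym2.eq_swap)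
          have hvx : v ≠ x := by
            rintro rfl
            exact hv.2 (by rw [Set.mem_singleton_iff]; exact Sym2.eq_swap)
          replace hu := hu.1
          replace hv := hv.1
          rcases hdeg2 w u v x hu hv hxw.symm with h | h | h
          · exact h
          · exact absurd h hux
          · exact absurd h hvx
        exact ih H' hcard'
          (fun v₁ a₁ b₁ c₁ h₁ h₂ h₃ =>
            hdeg2 v₁ a₁ b₁ c₁ (hadj' _ _ h₁) (hadj' _ _ h₂) (hadj' _ _ h₃))
          w a b hw'
          (fun p₁ q₁ h₁ h₂ => ha p₁ q₁ (hadj' _ _ h₁) (hadj' _ _ h₂))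
          (fun p₁ q₁ h₁ h₂ => hb p₁ q₁ (hadj' _ _ h₁) (hadj' _ _ h₂))
          haw hbw hwa hwb

/-- A good partial edge coloring. -/
def Good (c : Sym2 V → Option ℕ) : Prop :=
  (∀ e, c e ≠ none → e ∈ G.edgeSet) ∧
  (∀ e k, c e = some k → k < Δ + 1) ∧
  (∀ (u a b : V), a ≠ b → c s(u, a) ≠ none → c s(u, a) ≠ c s(u, b))

/-- Color `γ` does not appear on any edge at `u`. -/
def Free (c : Sym2 V → Option ℕ) (u : V) (γ : ℕ) : Prop :=
  ∀ e : Sym2 V, u ∈ e → c e ≠ some γ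

variable {G Δ}

lemma edge_form {c : Sym2 V → Option ℕ} (hg : Good G Δ c) {e : Sym2 V} {u : V}
    (hu : u ∈ e) (hne : c e ≠ none) : ∃ w, G.Adj u w ∧ e = s(u, w) := by
  obtain ⟨w, rfl⟩ := Sym2.mem_iff_exists.1 hu
  exact ⟨w, (G.mem_edgeSet).1 (hg.1 _ hne), rfl⟩

lemma exists_free {c : Sym2 V → Option ℕ} (hg : Good G Δ c)
    (hΔ : ∀ v : V, G.degree v ≤ Δ) (v : V) :
    ∃ γ, γ < Δ + 1 ∧ Free c v γ := by
  classical
  set NF : Finset ℕ := (Finset.range (Δ + 1)).filter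
    (fun γ => ∃ w ∈ G.neighborFinset v, c s(v, w) = some γ) with hNF
  have hsub : NF ⊆ (G.neighborFinset v).image (fun w => (c s(v, w)).getD 0) := by
    intro γ hγ
    rw [hNF, Finset.mem_filter] at hγ
    obtain ⟨-, w, hw, hcw⟩ := hγ
    exact Finset.mem_image.2 ⟨w, hw, by rw [hcw]; rfl⟩
  have hlt : NF.card < (Finset.range (Δ + 1)).card := by
    calc NF.card ≤ _ := Finset.card_le_card hsub
    _ ≤ (G.neighborFinset v).card := Finset.card_image_le
    _ = G.degree v := rfl
    _ ≤ Δ := hΔ v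
    _ < (Finset.range (Δ + 1)).card := by rw [Finset.card_range]; omega
  have hss : NF ⊂ Finset.range (Δ + 1) :=
    Finset.ssubset_iff_of_subset (fun t ht => (Finset.mem_filter.1 ht).1) |>.2 ?_
  case _ =>
    obtain ⟨γ, hγr, hγn⟩ := Finset.exists_of_ssubset hss
    refine ⟨γ, Finset.mem_range.1 hγr, ?_⟩
    intro e hv hce
    have hγΔ : (c e).getD 0 < Δ + 1 := by
      rw [hce]; exact hg.2.1 e _ hce
    obtain ⟨w, hadj, rfl⟩ := edge_form hg hv (by rw [hce]; simp)
    exact hγn (by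
      rw [hNF, Finset.mem_filter]
      exact ⟨hγr, w, (G.mem_neighborFinset v w).2 hadj, hce⟩)
  case _ =>
    by_contra hno
    push_neg at hno
    have : NF = Finset.range (Δ + 1) :=
      Finset.Subset.antisymm (fun t ht => (Finset.mem_filter.1 ht).1)
        (fun t ht => by
          rcases hno t ht with h; exact h)
    rw [this] at hlt; omega

/-! ### Kempe chains -/

variable (c : Sym2 V → Option ℕ) (α β : ℕ)

/-- The subgraph of edges colored `α` or `β`. -/
def KG : SimpleGraph V where
  Adj u v := u ≠ v ∧ (c s(u, v) = some α ∨ c s(u, v) = some β)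
  symm := ⟨by
    intro u v ⟨h1, h2⟩
    rw [Sym2.eq_swap] at h2
    exact ⟨h1.symm, h2⟩⟩
  loopless := ⟨fun u h => h.1 rfl⟩

variable {c α β}

lemma same_color_eq (hg : Good G Δ c) {v a b : V} {γ : ℕ}
    (ha : c s(v, a) = some γ) (hb : c s(v, b) = some γ) : a = b := by
  by_contra hne
  exact hg.2.2 v a b hne (by rw [ha]; simp) (by rw [ha, hb])

lemma KG_deg2 (hg : Good G Δ c) :
    ∀ v a b d : V, (KG c α β).Adj v a → (KG c α β).Adj v b → (KG c α β).Adj v d →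
      a = b ∨ a = d ∨ b = d := by
  intro v a b d ⟨_, ha⟩ ⟨_, hb⟩ ⟨_, hd⟩
  rcases ha with ha | ha <;> rcases hb with hb | hb <;> rcases hd with hd | hd
  · exact Or.inl (same_color_eq hg ha hb)
  · exact Or.inl (same_color_eq hg ha hb)
  · exact Or.inr (Or.inl (same_color_eq hg ha hd))
  · exact Or.inr (Or.inr (same_color_eq hg hb hd))
  · exact Or.inr (Or.inr (same_color_eq hg hb hd))
  · exact Or.inr (Or.inl (same_color_eq hg ha hd))
  · exact Or.inl (same_color_eq hg ha hb)
  · exact Or.inl (same_color_eq hg ha hb)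

lemma KG_deg1 (hg : Good G Δ c) {x : V} (hfree : Free c x α) :
    ∀ p q : V, (KG c α β).Adj x p → (KG c α β).Adj x q → p = q := by
  intro p q ⟨_, hp⟩ ⟨_, hq⟩
  rcases hp with hp | hp
  · exact absurd hp (hfree _ (by simp))
  rcases hq with hq | hq
  · exact absurd hq (hfree _ (by simp))
  exact same_color_eq hg hp hq

variable (c α β)

open Classical in
/-- Swap colors `α`/`β` on the Kempe component of `z`. -/
noncomputable def kflip (z : V) : Sym2 V → Option ℕ :=
  fun e => if (c e = some α ∨ c e = some β) ∧ (∃ w ∈ e, (KG c α β).Reachable z w)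
    then (if c e = some α then some β else some α) else c e

variable {c α β} {z : V}

lemma kflip_eq_of_not {e : Sym2 V} (h1 : c e ≠ some α) (h2 : c e ≠ some β) :
    kflip c α β z e = c e := by
  rw [kflip, if_neg]
  rintro ⟨h, -⟩
  tauto

lemma kflip_none {e : Sym2 V} : kflip c α β z e = none ↔ c e = none := by
  rw [kflip]
  split
  · rename_i h
    constructor
    · intro h'; split at h' <;> simp_all
    · intro h'; rw [h'] at h; simp at h
  · exact Iff.rfl

lemma kflip_other {e : Sym2 V} {γ : ℕ} (hγα : γ ≠ α) (hγβ : γ ≠ β) :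
    kflip c α β z e = some γ ↔ c e = some γ := by
  rw [kflip]
  split
  · rename_i h
    constructor
    · intro h'; split at h' <;> simp_all
    · intro h'
      rw [h'] at h
      rcases h.1 with h | h <;> simp_all
  · exact Iff.rfl

lemma kflip_spec (e : Sym2 V) :
    kflip c α β z e = c e ∨
    ((∃ w ∈ e, (KG c α β).Reachable z w) ∧
      ((c e = some α ∧ kflip c α β z e = some β) ∨
       (c e = some β ∧ kflip c α β z e = some α))) := by
  rw [kflip]
  split
  · rename_i h
    refine Or.inr ⟨h.2, ?_⟩
    rcases h.1 with h1 | h1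
    · rw [if_pos h1]; exact Or.inl ⟨h1, rfl⟩
    · split
      · rename_i h2; exact Or.inl ⟨h2, rfl⟩
      · exact Or.inr ⟨h1, rfl⟩
  · exact Or.inl rfl

lemma kflip_reach (hg : Good G Δ c) {e : Sym2 V} {u : V} (hu : u ∈ e)
    (hcol : c e = some α ∨ c e = some β)
    (hr : ∃ w ∈ e, (KG c α β).Reachable z w) : (KG c α β).Reachable z u := by
  have hne : c e ≠ none := by rcases hcol with h | h <;> rw [h] <;> simp
  obtain ⟨v, hadj, rfl⟩ := edge_form hg hu hne
  obtain ⟨w, hw, hrw⟩ := hr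
  rw [Sym2.mem_iff] at hw
  rcases hw with rfl | rfl
  · exact hrw
  · exact hrw.trans (SimpleGraph.Adj.reachable ⟨hadj.ne', by rwa [Sym2.eq_swap]⟩)

lemma kflip_at_reach {u : V} (hR : (KG c α β).Reachable z u) {e : Sym2 V}
    (hu : u ∈ e) :
    (c e = some α ∧ kflip c α β z e = some β) ∨
    (c e = some β ∧ c e ≠ some α ∧ kflip c α β z e = some α) ∨
    (c e ≠ some α ∧ c e ≠ some β ∧ kflip c α β z e = c e) := by
  by_cases h1 : c e = some α
  · refine Or.inl ⟨h1, ?_⟩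
    rw [kflip, if_pos ⟨Or.inl h1, u, hu, hR⟩, if_pos h1]
  · by_cases h2 : c e = some β
    · refine Or.inr (Or.inl ⟨h2, h1, ?_⟩)
      rw [kflip, if_pos ⟨Or.inr h2, u, hu, hR⟩, if_neg h1]
    · exact Or.inr (Or.inr ⟨h1, h2, kflip_eq_of_not h1 h2⟩)

lemma kflip_unreach (hg : Good G Δ c) {u : V} (hR : ¬ (KG c α β).Reachable z u)
    {e : Sym2 V} (hu : u ∈ e) : kflip c α β z e = c e := by
  rw [kflip]
  split
  · rename_i h
    exact absurd (kflip_reach hg hu h.1 h.2) hR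
  · rfl

lemma kflip_good (hg : Good G Δ c) (hα : α < Δ + 1) (hβ : β < Δ + 1) :
    Good G Δ (kflip c α β z) := by
  refine ⟨?_, ?_, ?_⟩
  · intro e he
    apply hg.1
    intro hnone
    exact he (by rwa [kflip_none])
  · intro e k hk
    rcases kflip_spec (c := c) (α := α) (β := β) (z := z) e with h | ⟨-, h | h⟩
    · exact hg.2.1 e k (h ▸ hk)
    · rw [h.2] at hk
      have := Option.some.inj hk
      omega
    · rw [h.2] at hk
      have := Option.some.inj hk
      omega
  · intro u a b hab h1 heq
    have hc1 : c s(u, a) ≠ none := fun h => h1 ((kflip_none).2 h)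
    have hc2 : c s(u, b) ≠ none := by
      intro h
      rw [heq] at h1
      exact h1 ((kflip_none).2 h)
    have hold : c s(u, a) ≠ c s(u, b) := hg.2.2 u a b hab hc1
    by_cases hR : (KG c α β).Reachable z u
    · rcases kflip_at_reach (z := z) hR (Sym2.mem_mk_left u a) with
        ⟨p1, q1⟩ | ⟨p1, p1', q1⟩ | ⟨p1, p1', q1⟩ <;>
      rcases kflip_at_reach (z := z) hR (Sym2.mem_mk_left u b) with
        ⟨p2, q2⟩ | ⟨p2, p2', q2⟩ | ⟨p2, p2', q2⟩ <;>
      rw [q1, q2] at heq <;> simp_all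
    · rw [kflip_unreach hg hR (Sym2.mem_mk_left u a),
        kflip_unreach hg hR (Sym2.mem_mk_left u b)] at heq
      exact hold heq

lemma kflip_free_swap (hg : Good G Δ c) {u : V} (hR : (KG c α β).Reachable z u)
    (hf : Free c u β) : Free (kflip c α β z) u α := by
  intro e hu hce
  rcases kflip_at_reach (z := z) hR hu with ⟨p, q⟩ | ⟨p, p', q⟩ | ⟨p, p', q⟩
  · rw [q] at hce
    have : β = α := Option.some.inj hce
    exact hf e hu (by rw [p, this])
  · exact hf e hu p
  · rw [q] at hce
    exact p hce

lemma kflip_free_other {u : V} {γ : ℕ} (hγα : γ ≠ α) (hγβ : γ ≠ β)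
    (hf : Free c u γ) : Free (kflip c α β z) u γ := by
  intro e hu hce
  exact hf e hu ((kflip_other hγα hγβ).1 hce)

/-! ### Fan rotation -/

open Classical in
noncomputable def rot (c₁ : Sym2 V → Option ℕ) (x : V) (v : ℕ → V) (m : ℕ) (α : ℕ) :
    Sym2 V → Option ℕ :=
  fun e => if h : ∃ i, i ≤ m ∧ e = s(x, v i) then
      (if h.choose = m then some α else c₁ s(x, v (h.choose + 1))) else c₁ e

section Rot

variable {c₁ : Sym2 V → Option ℕ} {x : V} {v : ℕ → V} {m : ℕ} {α : ℕ}
variable (hadj : ∀ i ≤ m, G.Adj x (v i))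
variable (hinj : ∀ i ≤ m, ∀ j ≤ m, v i = v j → i = j)

include hadj in
lemma sym2_fan_inj {i j : ℕ} (hi : i ≤ m) (hj : j ≤ m)
    (h : s(x, v i) = s(x, v j)) : v i = v j := by
  rw [Sym2.eq_iff] at h
  rcases h with ⟨-, h⟩ | ⟨h1, h2⟩
  · exact h
  · exact absurd h1 (hadj j hj).ne

include hadj hinj in
lemma rot_eval {i : ℕ} (hi : i ≤ m) :
    rot c₁ x v m α s(x, v i) = if i = m then some α else c₁ s(x, v (i + 1)) := by
  have h : ∃ j, j ≤ m ∧ s(x, v i) = s(x, v j) := ⟨i, hi, rfl⟩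
  rw [rot, dif_pos h]
  have hspec := h.choose_spec
  have : h.choose = i :=
    hinj _ hspec.1 _ hi (sym2_fan_inj hadj hspec.1 hi hspec.2.symm)
  rw [this]

lemma rot_eval_other {e : Sym2 V} (he : ∀ i ≤ m, e ≠ s(x, v i)) :
    rot c₁ x v m α e = c₁ e := by
  rw [rot, dif_neg]
  rintro ⟨i, hi, rfl⟩
  exact he i hi rfl

include hadj hinj in
lemma rotate_lemma (hg : Good G Δ c₁)
    (h0 : c₁ s(x, v 0) = none)
    (hfan : ∀ i < m, ∃ γ, c₁ s(x, v (i + 1)) = some γ ∧ Free c₁ (v i) γ)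
    (hα : α < Δ + 1) (hfx : Free c₁ x α) (hfm : Free c₁ (v m) α) :
    ∃ c₂, Good G Δ c₂ ∧ (∀ e, c₂ e = none → c₁ e = none) ∧
      c₂ s(x, v 0) ≠ none := by
  refine ⟨rot c₁ x v m α, ⟨?_, ?_, ?_⟩, ?_, ?_⟩
  · -- domain
    intro e he
    by_cases hf : ∃ i, i ≤ m ∧ e = s(x, v i)
    · obtain ⟨i, hi, rfl⟩ := hf
      exact (G.mem_edgeSet).2 (hadj i hi)
    · push_neg at hf
      rw [rot_eval_other hf] at he
      exact hg.1 e he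
  · -- bound
    intro e k hk
    by_cases hf : ∃ i, i ≤ m ∧ e = s(x, v i)
    · obtain ⟨i, hi, rfl⟩ := hf
      rw [rot_eval hadj hinj hi] at hk
      split at hk
      · have := Option.some.inj hk; omega
      · rename_i hne
        exact hg.2.1 _ _ hk
    · push_neg at hf
      rw [rot_eval_other hf] at hk
      exact hg.2.1 _ _ hk
  · -- properness
    have claim : ∀ i ≤ m, ∀ e : Sym2 V, (∀ j ≤ m, e ≠ s(x, v j)) →
        (∃ w, w ∈ s(x, v i) ∧ w ∈ e) → rot c₁ x v m α s(x, v i) ≠ c₁ e := by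
      intro i hi e hnf ⟨w, hw1, hw2⟩
      rw [Sym2.mem_iff] at hw1
      rw [rot_eval hadj hinj hi]
      by_cases him : i = m
      · rw [if_pos him]
        intro hce
        rcases hw1 with h | h
        · rw [h] at hw2
          exact hfx e hw2 hce.symm
        · rw [h, him] at hw2
          exact hfm e hw2 hce.symm
      · rw [if_neg him]
        obtain ⟨γ, hγ, hfree⟩ := hfan i (by omega)
        rw [hγ]
        intro hce
        rcases hw1 with h | h
        · -- w = x : two distinct edges at x
          rw [h] at hw2
          have hne : c₁ e ≠ none := by rw [← hce]; simp
          obtain ⟨b', hb', rfl⟩ := edge_form hg hw2 hne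
          have hbne : v (i + 1) ≠ b' := by
            rintro rfl
            exact hnf (i + 1) (by omega) rfl
          exact hg.2.2 x (v (i + 1)) b' hbne (by rw [hγ]; simp)
            (by rw [hγ, hce])
        · rw [h] at hw2
          exact hfree e hw2 hce.symm
    intro u a b hab h1 heq
    by_cases hf1 : ∃ i, i ≤ m ∧ s(u, a) = s(x, v i) <;>
      by_cases hf2 : ∃ i, i ≤ m ∧ s(u, b) = s(x, v i)
    · -- both fan edges
      obtain ⟨i, hi, he1⟩ := hf1
      obtain ⟨j, hj, he2⟩ := hf2
      have hij : i ≠ j := by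
        rintro rfl
        rw [← he2] at he1
        rw [Sym2.eq_iff] at he1
        rcases he1 with ⟨-, h⟩ | ⟨h1', h2'⟩
        · exact hab h
        · exact hab (h2'.trans h1')
      rw [he1, he2, rot_eval hadj hinj hi, rot_eval hadj hinj hj] at heq
      by_cases him : i = m <;> by_cases hjm : j = m
      · exact (hij (him.trans hjm.symm)).elim
      · rw [if_pos him, if_neg hjm] at heq
        exact hfx s(x, v (j + 1)) (by simp) heq.symm
      · rw [if_neg him, if_pos hjm] at heq
        exact hfx s(x, v (i + 1)) (by simp) heq
      · rw [if_neg him, if_neg hjm] at heq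
        have hne : v (i + 1) ≠ v (j + 1) := by
          intro h
          have := hinj (i + 1) (by omega) (j + 1) (by omega) h
          omega
        obtain ⟨γ, hγ, -⟩ := hfan i (by omega)
        exact hg.2.2 x (v (i + 1)) (v (j + 1)) hne (by rw [hγ]; simp) heq
    · -- e₁ fan, e₂ not
      obtain ⟨i, hi, he1⟩ := hf1
      push_neg at hf2
      rw [he1] at heq
      rw [rot_eval_other hf2] at heq
      exact claim i hi s(u, b) hf2
        ⟨u, by rw [← he1]; simp, by simp⟩ heq
    · -- e₂ fan, e₁ not
      obtain ⟨j, hj, he2⟩ := hf2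
      push_neg at hf1
      rw [he2] at heq
      rw [rot_eval_other hf1] at heq
      exact claim j hj s(u, a) hf1
        ⟨u, by rw [← he2]; simp, by simp⟩ heq.symm
    · push_neg at hf1; push_neg at hf2
      rw [rot_eval_other hf1] at heq h1
      rw [rot_eval_other hf2] at heq
      exact hg.2.2 u a b hab h1 heq
  · -- none preserved
    intro e he
    by_cases hf : ∃ i, i ≤ m ∧ e = s(x, v i)
    · obtain ⟨i, hi, rfl⟩ := hf
      rw [rot_eval hadj hinj hi] at he
      split at he
      · exact absurd he (by simp)
      · rename_i him
        obtain ⟨γ, hγ, -⟩ := hfan i (by omega)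
        rw [hγ] at he
        exact absurd he (by simp)
    · push_neg at hf
      rwa [rot_eval_other hf] at he
  · -- v 0 edge colored
    rw [rot_eval hadj hinj (Nat.zero_le m)]
    split
    · simp
    · rename_i him
      obtain ⟨γ, hγ, -⟩ := hfan 0 (by omega)
      rw [hγ]
      simp

end Rot

lemma KG_deg1' (hg : Good G Δ c) {x : V} (hfree : Free c x β) :
    ∀ p q : V, (KG c α β).Adj x p → (KG c α β).Adj x q → p = q := by
  intro p q ⟨_, hp⟩ ⟨_, hq⟩
  rcases hp with hp | hp
  · rcases hq with hq | hq
    · exact same_color_eq hg hp hq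
    · exact absurd hq (hfree _ (by simp))
  · exact absurd hp (hfree _ (by simp))

/-! ### Fans and the augmentation step -/

variable (G) in
def IsFan (c : Sym2 V → Option ℕ) (x : V) (v : ℕ → V) (k : ℕ) : Prop :=
  (∀ i ≤ k, G.Adj x (v i)) ∧ (∀ i ≤ k, ∀ j ≤ k, v i = v j → i = j) ∧
  c s(x, v 0) = none ∧
  (∀ i < k, ∃ γ, c s(x, v (i + 1)) = some γ ∧ Free c (v i) γ)

lemma kempe_case (hg : Good G Δ c) {x : V} {v : ℕ → V} {k : ℕ}
    (hfan : IsFan G c x v k) {j m : ℕ} (hj1 : 1 ≤ j) (hjk : j ≤ k)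
    (hce : c s(x, v j) = some β) (hm : m ≤ k)
    {α : ℕ} (hαlt : α < Δ + 1) (hβlt : β < Δ + 1)
    (hαfree : Free c x α) (hβm : Free c (v m) β)
    (hz : ¬ (KG c α β).Reachable x (v m))
    (hspecial : ∀ i, i < m → i + 1 = j → ¬ (KG c α β).Reachable (v m) (v i)) :
    ∃ c', Good G Δ c' ∧ (∀ e, c' e = none → c e = none) ∧ c' s(x, v 0) ≠ none := by
  set z := v m with hzdef
  set c₁ := kflip c α β z with hc₁
  have hz' : ¬ (KG c α β).Reachable z x := fun h => hz h.symm
  have hg₁ : Good G Δ c₁ := kflip_good hg hαlt hβlt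
  have hx_unch : ∀ e : Sym2 V, x ∈ e → c₁ e = c e :=
    fun e he => kflip_unreach hg hz' he
  have hαfree₁ : Free c₁ x α := by
    intro e he hce'
    rw [hx_unch e he] at hce'
    exact hαfree e he hce'
  have hαfreem : Free c₁ (v m) α :=
    kflip_free_swap hg (SimpleGraph.Reachable.refl z) hβm
  have h0 : c₁ s(x, v 0) = none := (kflip_none).2 hfan.2.2.1
  have hfan₁ : ∀ i < m, ∃ γ, c₁ s(x, v (i + 1)) = some γ ∧ Free c₁ (v i) γ := by
    intro i hi
    obtain ⟨γ, hγ, hfree⟩ := hfan.2.2.2 i (by omega)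
    refine ⟨γ, by rw [hx_unch _ (by simp)]; exact hγ, ?_⟩
    have hγα : γ ≠ α := by
      rintro rfl
      exact hαfree _ (by simp) hγ
    by_cases hγβ : γ = β
    · -- then i + 1 = j
      rw [hγβ] at hγ
      have : v (i + 1) = v j := same_color_eq hg hγ hce
      have hij : i + 1 = j := hfan.2.1 (i + 1) (by omega) j (by omega) this
      have hnr := hspecial i hi hij
      intro e he hce'
      rw [hc₁, kflip_unreach hg hnr he] at hce'
      exact hfree e he hce'
    · exact kflip_free_other hγα hγβ hfree
  obtain ⟨c₂, hgood, hnone, hcol⟩ :=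
    rotate_lemma (fun i hi => hfan.1 i (by omega))
      (fun i hi j' hj' h => hfan.2.1 i (by omega) j' (by omega) h)
      hg₁ h0 hfan₁ hαlt hαfree₁ hαfreem
  exact ⟨c₂, hgood, fun e he => (kflip_none).1 (hnone e he), hcol⟩

lemma step (hΔ : ∀ u : V, G.degree u ≤ Δ) {c : Sym2 V → Option ℕ}
    (hg : Good G Δ c) {x y : V} (hadj : G.Adj x y) (hnone : c s(x, y) = none) :
    ∃ c', Good G Δ c' ∧ (∀ e, c' e = none → c e = none) ∧ c' s(x, y) ≠ none := by
  classical
  set P : ℕ → Prop := fun k => ∃ v : ℕ → V, IsFan G c x v k ∧ v 0 = y with hPdef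
  have hP0 : P 0 := ⟨fun _ => y, ⟨fun i _ => hadj, fun i hi j hj _ => (by omega),
    hnone, fun i hi => absurd hi (by omega)⟩, rfl⟩
  have hbound : ∀ k, P k → k < Fintype.card V := by
    intro k hk
    obtain ⟨v, hfan, -⟩ := hk
    have : (Finset.range (k + 1)).card ≤ (Finset.univ : Finset V).card := by
      apply Finset.card_le_card_of_injOn (fun i => v i)
        (fun i _ => Finset.mem_univ _)
      intro i hi j hj h
      exact hfan.2.1 i (by simpa using Nat.lt_succ_iff.1 (Finset.mem_range.1 hi))
        j (by simpa using Nat.lt_succ_iff.1 (Finset.mem_range.1 hj)) h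
    rw [Finset.card_range] at this
    have : k + 1 ≤ Fintype.card V := by rwa [Finset.card_univ] at this
    omega
  set k := Nat.findGreatest P (Fintype.card V) with hkdef
  have hPk : P k := Nat.findGreatest_spec (Nat.zero_le _) hP0
  have hmax : ¬ P (k + 1) := by
    intro h
    have h1 := Nat.le_findGreatest (le_of_lt (hbound _ h)) h
    omega
  obtain ⟨v, hfan, hv0⟩ := hPk
  obtain ⟨β, hβlt, hβfree⟩ := exists_free hg hΔ (v k)
  by_cases hβx : Free c x β
  · obtain ⟨c₂, h1, h2, h3⟩ := rotate_lemma hfan.1 hfan.2.1 hg hfan.2.2.1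
      hfan.2.2.2 hβlt hβx hβfree
    exact ⟨c₂, h1, h2, by rwa [← hv0]⟩
  · rw [_root_.Free] at hβx
    push_neg at hβx
    obtain ⟨e, hxe, hce⟩ := hβx
    obtain ⟨w, hxw, rfl⟩ := edge_form hg hxe (by rw [hce]; simp)
    have hwfan : ∃ j, j ≤ k ∧ w = v j := by
      by_contra hno
      push_neg at hno
      apply hmax
      refine ⟨Function.update v (k + 1) w, ⟨?_, ?_, ?_, ?_⟩, ?_⟩
      · intro i hi
        rcases eq_or_ne i (k + 1) with rfl | hik
        · rw [Function.update_self]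
          exact hxw
        · rw [Function.update_of_ne hik]
          exact hfan.1 i (by omega)
      · intro i hi j hj h
        rcases eq_or_ne i (k + 1) with rfl | hik <;>
          rcases eq_or_ne j (k + 1) with rfl | hjk
        · rfl
        · rw [Function.update_self, Function.update_of_ne hjk] at h
          exact absurd h (hno j (by omega))
        · rw [Function.update_of_ne hik, Function.update_self] at h
          exact absurd h.symm (hno i (by omega))
        · rw [Function.update_of_ne hik, Function.update_of_ne hjk] at h
          exact hfan.2.1 i (by omega) j (by omega) h
      · rw [Function.update_of_ne (by omega)]
        exact hfan.2.2.1
      · intro i hi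
        by_cases hik : i = k
        · subst hik
          rw [Function.update_self, Function.update_of_ne (by omega)]
          exact ⟨β, hce, hβfree⟩
        · rw [Function.update_of_ne (by omega), Function.update_of_ne (by omega)]
          exact hfan.2.2.2 i (by omega)
      · rw [Function.update_of_ne (by omega)]
        exact hv0
    obtain ⟨j, hj, rfl⟩ := hwfan
    have hj1 : 1 ≤ j := by
      rcases Nat.eq_zero_or_pos j with rfl | h
      · rw [hfan.2.2.1] at hce
        exact absurd hce (by simp)
      · exact h
    have hjk : j < k := by
      rcases Nat.lt_or_ge j k with h | h
      · exact h
      · have : j = k := by omega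
        subst this
        exact absurd hce (hβfree _ (by simp))
    obtain ⟨α, hαlt, hαfree⟩ := exists_free hg hΔ x
    have hβj1 : Free c (v (j - 1)) β := by
      obtain ⟨γ, hγ, hfree⟩ := hfan.2.2.2 (j - 1) (by omega)
      have : j - 1 + 1 = j := by omega
      rw [this] at hγ
      rw [hγ] at hce
      have : γ = β := Option.some.inj hce
      rwa [← this]
    have hd2 := KG_deg2 (α := α) (β := β) hg
    have hdx := KG_deg1 (β := β) hg hαfree
    have hdj1 := KG_deg1' (α := α) hg hβj1
    have hdk := KG_deg1' (α := α) hg hβfree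
    have hnej1 : v (j - 1) ≠ x := (hfan.1 (j - 1) (by omega)).ne'
    have hnek : v k ≠ x := (hfan.1 k le_rfl).ne'
    have hnejk : v (j - 1) ≠ v k := by
      intro h
      have := hfan.2.1 (j - 1) (by omega) k le_rfl h
      omega
    by_cases hrj : (KG c α β).Reachable x (v (j - 1))
    · -- flip component of v k
      have hrk : ¬ (KG c α β).Reachable x (v k) := by
        intro hrk
        exact hnejk (three_endpoints (KG c α β).edgeSet.ncard (KG c α β) le_rfl
          hd2 x (v (j - 1)) (v k) hdx hdj1 hdk hnej1 hnek hrj hrk)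
      obtain ⟨c', h1, h2, h3⟩ := kempe_case hg hfan hj1 (by omega) hce le_rfl
        hαlt hβlt hαfree hβfree hrk
        (fun i hi hij => by
          have : i = j - 1 := by omega
          subst this
          intro hr
          exact hrk (hrj.trans hr.symm))
      exact ⟨c', h1, h2, by rwa [← hv0]⟩
    · -- flip component of v (j - 1)
      obtain ⟨c', h1, h2, h3⟩ := kempe_case hg hfan hj1 (by omega) hce
        (show j - 1 ≤ k by omega) hαlt hβlt hαfree hβj1 hrj
        (fun i hi hij => by omega)
      exact ⟨c', h1, h2, by rwa [← hv0]⟩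

end Setup

section Main
variable {V : Type*} [Fintype V] [DecidableEq V]
variable {G : SimpleGraph V} [DecidableRel G.Adj] {Δ : ℕ}

lemma extend_all (hΔ : ∀ u : V, G.degree u ≤ Δ) :
    ∀ (N : ℕ) (c : Sym2 V → Option ℕ), Good G Δ c →
      (G.edgeFinset.filter (fun e => c e = none)).card ≤ N →
      ∃ c', Good G Δ c' ∧ ∀ e ∈ G.edgeSet, c' e ≠ none := by
  intro N
  induction N with
  | zero =>
    intro c hg hcard
    refine ⟨c, hg, fun e he hnone => ?_⟩
    have hmem : e ∈ G.edgeFinset.filter (fun e => c e = none) :=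
      Finset.mem_filter.2 ⟨mem_edgeFinset.2 he, hnone⟩
    have := Finset.card_pos.2 ⟨e, hmem⟩
    omega
  | succ N ih =>
    intro c hg hcard
    rcases Finset.eq_empty_or_nonempty (G.edgeFinset.filter (fun e => c e = none))
      with hemp | ⟨e₀, he₀⟩
    · refine ⟨c, hg, fun e he hnone => ?_⟩
      have hmem : e ∈ G.edgeFinset.filter (fun e => c e = none) :=
        Finset.mem_filter.2 ⟨mem_edgeFinset.2 he, hnone⟩
      rw [hemp] at hmem
      exact absurd hmem (Finset.notMem_empty e)
    · rw [Finset.mem_filter] at he₀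
      obtain ⟨⟨x, y⟩, rfl⟩ := Quot.exists_rep e₀
      have hadj : G.Adj x y := G.mem_edgeSet.1 (mem_edgeFinset.1 he₀.1)
      obtain ⟨c', hg', hmon, hcol⟩ := step hΔ hg hadj he₀.2
      apply ih c' hg'
      have hsub : G.edgeFinset.filter (fun e => c' e = none) ⊆
          (G.edgeFinset.filter (fun e => c e = none)).erase s(x, y) := by
        intro e he
        rw [Finset.mem_filter] at he
        refine Finset.mem_erase.2 ⟨?_, Finset.mem_filter.2 ⟨he.1, hmon e he.2⟩⟩
        rintro rfl
        exact hcol he.2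
      have hin : s(x, y) ∈ G.edgeFinset.filter (fun e => c e = none) :=
        Finset.mem_filter.2 he₀
      have h1 := Finset.card_le_card hsub
      rw [Finset.card_erase_of_mem hin] at h1
      have h2 := Finset.card_pos.2 ⟨_, hin⟩
      omega

end Main

/-- **Vizing's theorem.** Every finite simple graph with maximum degree at most `Δ`
admits a proper edge coloring of all of its edges using at most `Δ + 1` colors. -/
theorem vizing_edge_coloring {V : Type*} [Fintype V] [DecidableEq V]
    (G : SimpleGraph V) [DecidableRel G.Adj] (Δ : ℕ)
    (hΔ : ∀ v : V, G.degree v ≤ Δ) :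
    ∃ φ : Sym2 V → ℕ,
      (∀ e ∈ G.edgeSet, φ e < Δ + 1) ∧
      (∀ e₁ ∈ G.edgeSet, ∀ e₂ ∈ G.edgeSet,
        e₁ ≠ e₂ → (∃ x : V, x ∈ e₁ ∧ x ∈ e₂) → φ e₁ ≠ φ e₂) := by
  classical
  obtain ⟨c', hg', htotal⟩ := extend_all hΔ G.edgeFinset.card (fun _ => none)
    ⟨fun e h => absurd rfl h, fun e k h => (by cases h),
      fun u a b _ h => absurd rfl h⟩
    (Finset.card_filter_le _ _)
  refine ⟨fun e => (c' e).getD 0, ?_, ?_⟩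
  · intro e he
    obtain ⟨k, hk⟩ := Option.ne_none_iff_exists'.1 (htotal e he)
    simp only [hk, Option.getD_some]
    exact hg'.2.1 e k hk
  · rintro e₁ h1 e₂ h2 hne ⟨u, hu1, hu2⟩
    obtain ⟨a, ha, rfl⟩ := edge_form hg' hu1 (htotal e₁ h1)
    obtain ⟨b, hb, rfl⟩ := edge_form hg' hu2 (htotal e₂ h2)
    have hab : a ≠ b := fun h => hne (by rw [h])
    have hneq := hg'.2.2 u a b hab (htotal _ h1)
    obtain ⟨k1, hk1⟩ := Option.ne_none_iff_exists'.1 (htotal _ h1)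
    obtain ⟨k2, hk2⟩ := Option.ne_none_iff_exists'.1 (htotal _ h2)
    simp only [hk1, hk2, Option.getD_some]
    intro h
    apply hneq
    rw [hk1, hk2, h]
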